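/- Let Ω ⊂ ℝ³ be bounded, V the divergence-free subspace of (H₀¹(Ω))³, and λ₁ > 0 the smallest eigenvalue of the Stokes operator with Dirichlet boundary conditions on Ω, so that ‖v‖_{L⁴(Ω)} ≤ C_{4,P} ‖∇v‖_{L²} for all v ∈ V with C_{4,P} ≤ (8/9)^{1/4} λ₁^{−1/8}. Then for all v, w, u, ũ ∈ V: |((v·∇)u, ũ) + ((u·∇)v, ũ) − ((w·∇)u, ũ) − ((u·∇)w, ũ)| ≤ 2√3 C_{4,P}² ‖∇(v−w)‖ ‖∇u‖ ‖∇ũ‖, i.e., the Fréchet derivative of the Navier–Stokes nonlinearity is Lipschitz in operator norm with constant G = (4√6/3) λ₁^{−1/4}. -/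

import Mathlib

open MeasureTheory
open scoped RealInnerProductSpace

noncomputable section

/-- Three-dimensional Euclidean space. -/
abbrev E3 := EuclideanSpace ℝ (Fin 3)

/-- `pd u j x` is the partial derivative `∂_j u (x)` of a vector field `u`. -/
def pd (u : E3 → E3) (j : Fin 3) (x : E3) : E3 :=
  fderiv ℝ u x (EuclideanSpace.single j 1)

/-- Pointwise Frobenius product `∇u(x) · ∇v(x)`. -/
def gradDot (u v : E3 → E3) (x : E3) : ℝ := ∑ j, ⟪pd u j x, pd v j x⟫

/-- Divergence of a vector field. -/
def divg (u : E3 → E3) (x : E3) : ℝ := ∑ j, pd u j x j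

/-- Membership in `V = {v ∈ (H₀¹(Ω))³ : div v = 0}` (vector fields vanishing
outside `Ω` and divergence free). -/
def memV (Ω : Set E3) (u : E3 → E3) : Prop :=
  ContDiff ℝ 1 u ∧ (∀ x ∉ Ω, u x = 0) ∧ ∀ x, divg u x = 0

/-- Trilinear convection form `((w·∇)u)·v` at a point. -/
def convf (w u v : E3 → E3) (x : E3) : ℝ := ∑ j, w x j * ⟪pd u j x, v x⟫

/-- `H¹₀`-norm (gradient `L²`-norm) over `Ω`. -/
def gradNorm (Ω : Set E3) (u : E3 → E3) : ℝ := Real.sqrt (∫ x in Ω, gradDot u u x)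

/-- `L⁴`-norm over `Ω`. -/
def l4Norm (Ω : Set E3) (u : E3 → E3) : ℝ := (∫ x in Ω, ‖u x‖ ^ 4) ^ ((1 : ℝ) / 4)


lemma continuous_pd {u : E3 → E3} (hu : ContDiff ℝ 1 u) (j : Fin 3) :
    Continuous (pd u j) :=
  (hu.continuous_fderiv one_ne_zero).clm_apply continuous_const

lemma continuous_coord (a : E3 → E3) (ha : Continuous a) (j : Fin 3) :
    Continuous fun x => a x j :=
  (EuclideanSpace.proj (𝕜 := ℝ) j).continuous.comp ha

lemma continuous_convf {a b c : E3 → E3} (ha : ContDiff ℝ 1 a) (hb : ContDiff ℝ 1 b)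
    (hc : ContDiff ℝ 1 c) : Continuous (convf a b c) := by
  unfold convf
  exact continuous_finset_sum _ fun j _ =>
    (continuous_coord a ha.continuous j).mul ((continuous_pd hb j).inner hc.continuous)

lemma continuous_gradDot {b : E3 → E3} (hb : ContDiff ℝ 1 b) :
    Continuous (gradDot b b) := by
  unfold gradDot
  exact continuous_finset_sum _ fun j _ => (continuous_pd hb j).inner (continuous_pd hb j)

lemma memLp_cont {Ω : Set E3} (hΩo : IsOpen Ω) (hΩb : Bornology.IsBounded Ω) {f : E3 → ℝ}
    (hf : Continuous f) (p : ENNReal) : MemLp f p (volume.restrict Ω) := by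
  haveI : IsFiniteMeasure (volume.restrict Ω) :=
    ⟨by rw [Measure.restrict_apply_univ]; exact hΩb.measure_lt_top⟩
  obtain ⟨C, hC⟩ := hΩb.isCompact_closure.exists_bound_of_continuousOn hf.continuousOn
  refine MemLp.of_bound hf.aestronglyMeasurable.restrict C ?_
  exact (ae_restrict_iff' hΩo.measurableSet).2
    (ae_of_all _ fun x hx => hC x (subset_closure hx))

lemma integrableOn_cont {Ω : Set E3} (hΩo : IsOpen Ω) (hΩb : Bornology.IsBounded Ω) {f : E3 → ℝ}
    (hf : Continuous f) : IntegrableOn f Ω :=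
  memLp_one_iff_integrable.mp (memLp_cont hΩo hΩb hf 1)

lemma gradDot_nonneg (b : E3 → E3) (x : E3) : 0 ≤ gradDot b b x :=
  Finset.sum_nonneg fun j _ => real_inner_self_nonneg

lemma convf_abs_le (a b c : E3 → E3) (x : E3) :
    |convf a b c x| ≤ ‖a x‖ * ‖c x‖ * Real.sqrt (gradDot b b x) := by
  have h1 : |convf a b c x| ≤ ∑ j, |a x j| * |⟪pd b j x, c x⟫| := by
    refine (Finset.abs_sum_le_sum_abs _ _).trans ?_
    simp [abs_mul, le_refl]
  have h2 : ∑ j, |a x j| * |⟪pd b j x, c x⟫| ≤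
      Real.sqrt (∑ j, |a x j| ^ 2) * Real.sqrt (∑ j, |⟪pd b j x, c x⟫| ^ 2) :=
    Real.sum_mul_le_sqrt_mul_sqrt _ _ _
  have h3 : Real.sqrt (∑ j, |a x j| ^ 2) = ‖a x‖ := by
    rw [EuclideanSpace.norm_eq]
    simp [Real.norm_eq_abs]
  have h4 : Real.sqrt (∑ j, |⟪pd b j x, c x⟫| ^ 2) ≤ Real.sqrt (gradDot b b x) * ‖c x‖ := by
    have : ∑ j, |⟪pd b j x, c x⟫| ^ 2 ≤ gradDot b b x * ‖c x‖ ^ 2 := by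
      have : ∀ j : Fin 3, |⟪pd b j x, c x⟫| ^ 2 ≤ ‖pd b j x‖ ^ 2 * ‖c x‖ ^ 2 := fun j => by
        rw [← mul_pow]
        exact pow_le_pow_left₀ (abs_nonneg _) (abs_real_inner_le_norm _ _) 2
      calc ∑ j, |⟪pd b j x, c x⟫| ^ 2 ≤ ∑ j, ‖pd b j x‖ ^ 2 * ‖c x‖ ^ 2 :=
            Finset.sum_le_sum fun j _ => this j
        _ = (∑ j, ‖pd b j x‖ ^ 2) * ‖c x‖ ^ 2 := by rw [Finset.sum_mul]
        _ = gradDot b b x * ‖c x‖ ^ 2 := by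
            unfold gradDot
            congr 1
            exact Finset.sum_congr rfl fun j _ => (real_inner_self_eq_norm_sq _).symm
    calc Real.sqrt (∑ j, |⟪pd b j x, c x⟫| ^ 2) ≤ Real.sqrt (gradDot b b x * ‖c x‖ ^ 2) :=
          Real.sqrt_le_sqrt this
      _ = Real.sqrt (gradDot b b x) * ‖c x‖ := by
          rw [Real.sqrt_mul (gradDot_nonneg b x), Real.sqrt_sq (norm_nonneg _)]
  calc |convf a b c x| ≤ ∑ j, |a x j| * |⟪pd b j x, c x⟫| := h1
    _ ≤ Real.sqrt (∑ j, |a x j| ^ 2) * Real.sqrt (∑ j, |⟪pd b j x, c x⟫| ^ 2) := h2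
    _ ≤ ‖a x‖ * (Real.sqrt (gradDot b b x) * ‖c x‖) := by
        rw [h3]; exact mul_le_mul_of_nonneg_left h4 (norm_nonneg _)
    _ = ‖a x‖ * ‖c x‖ * Real.sqrt (gradDot b b x) := by ring

lemma gradNorm_nonneg (Ω : Set E3) (u : E3 → E3) : 0 ≤ gradNorm Ω u := Real.sqrt_nonneg _

lemma l4Norm_nonneg (Ω : Set E3) (u : E3 → E3) : 0 ≤ l4Norm Ω u :=
  Real.rpow_nonneg (integral_nonneg fun x => by positivity) _

lemma key {Ω : Set E3} (hΩo : IsOpen Ω) (hΩb : Bornology.IsBounded Ω) {a b c : E3 → E3}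
    (ha : ContDiff ℝ 1 a) (hb : ContDiff ℝ 1 b) (hc : ContDiff ℝ 1 c) :
    |∫ x in Ω, convf a b c x| ≤ l4Norm Ω a * l4Norm Ω c * gradNorm Ω b := by
  have hpq : Real.HolderConjugate 2 2 := Real.HolderConjugate.two_two
  have hna : Continuous fun x => ‖a x‖ := ha.continuous.norm
  have hnc : Continuous fun x => ‖c x‖ := hc.continuous.norm
  have hg : Continuous fun x => Real.sqrt (gradDot b b x) :=
    Real.continuous_sqrt.comp (continuous_gradDot hb)
  have step1 : |∫ x in Ω, convf a b c x| ≤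
      ∫ x in Ω, (‖a x‖ * ‖c x‖) * Real.sqrt (gradDot b b x) := by
    calc |∫ x in Ω, convf a b c x| ≤ ∫ x in Ω, |convf a b c x| := by
          simpa [Real.norm_eq_abs] using
            norm_integral_le_integral_norm (μ := volume.restrict Ω) (convf a b c)
      _ ≤ _ := by
          refine integral_mono (integrableOn_cont hΩo hΩb (continuous_convf ha hb hc)).abs
            (integrableOn_cont hΩo hΩb ((hna.mul hnc).mul hg)) fun x => ?_
          exact convf_abs_le a b c x
  have step2 : ∫ x in Ω, (‖a x‖ * ‖c x‖) * Real.sqrt (gradDot b b x) ≤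
      (∫ x in Ω, (‖a x‖ * ‖c x‖) ^ (2:ℝ)) ^ (1/(2:ℝ)) *
      (∫ x in Ω, (Real.sqrt (gradDot b b x)) ^ (2:ℝ)) ^ (1/(2:ℝ)) :=
    integral_mul_le_Lp_mul_Lq_of_nonneg hpq
      (ae_of_all _ fun x => mul_nonneg (norm_nonneg _) (norm_nonneg _))
      (ae_of_all _ fun x => Real.sqrt_nonneg _)
      (memLp_cont hΩo hΩb (hna.mul hnc) _) (memLp_cont hΩo hΩb hg _)
  have hgrad : (∫ x in Ω, (Real.sqrt (gradDot b b x)) ^ (2:ℝ)) ^ (1/(2:ℝ)) = gradNorm Ω b := by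
    have e : ∫ x in Ω, (Real.sqrt (gradDot b b x)) ^ (2:ℝ) = ∫ x in Ω, gradDot b b x :=
      integral_congr_ae (ae_of_all _ fun x => by
        simp only [Real.rpow_two, Real.sq_sqrt (gradDot_nonneg b x)])
    rw [e, ← Real.sqrt_eq_rpow]; rfl
  have hF : (∫ x in Ω, (‖a x‖ * ‖c x‖) ^ (2:ℝ)) ^ (1/(2:ℝ)) ≤ l4Norm Ω a * l4Norm Ω c := by
    have e1 : ∫ x in Ω, (‖a x‖ * ‖c x‖) ^ (2:ℝ) = ∫ x in Ω, ‖a x‖ ^ 2 * ‖c x‖ ^ 2 :=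
      integral_congr_ae (ae_of_all _ fun x => by simp only [Real.rpow_two]; ring)
    have ea : ∫ x in Ω, ((‖a x‖ ^ 2 : ℝ)) ^ (2:ℝ) = ∫ x in Ω, ‖a x‖ ^ 4 :=
      integral_congr_ae (ae_of_all _ fun x => by simp only [Real.rpow_two, ← pow_mul])
    have ec : ∫ x in Ω, ((‖c x‖ ^ 2 : ℝ)) ^ (2:ℝ) = ∫ x in Ω, ‖c x‖ ^ 4 :=
      integral_congr_ae (ae_of_all _ fun x => by simp only [Real.rpow_two, ← pow_mul])
    have hHolder : ∫ x in Ω, ‖a x‖ ^ 2 * ‖c x‖ ^ 2 ≤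
        (∫ x in Ω, ‖a x‖ ^ 4) ^ (1/(2:ℝ)) * (∫ x in Ω, ‖c x‖ ^ 4) ^ (1/(2:ℝ)) := by
      have := integral_mul_le_Lp_mul_Lq_of_nonneg hpq
        (μ := volume.restrict Ω)
        (f := fun x => ‖a x‖ ^ 2) (g := fun x => ‖c x‖ ^ 2)
        (ae_of_all _ fun x => sq_nonneg _) (ae_of_all _ fun x => sq_nonneg _)
        (memLp_cont hΩo hΩb (hna.pow 2) _) (memLp_cont hΩo hΩb (hnc.pow 2) _)
      rwa [ea, ec] at this
    have hI4a : (0:ℝ) ≤ ∫ x in Ω, ‖a x‖ ^ 4 := integral_nonneg fun x => by positivity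
    have hI4c : (0:ℝ) ≤ ∫ x in Ω, ‖c x‖ ^ 4 := integral_nonneg fun x => by positivity
    calc (∫ x in Ω, (‖a x‖ * ‖c x‖) ^ (2:ℝ)) ^ (1/(2:ℝ))
        = (∫ x in Ω, ‖a x‖ ^ 2 * ‖c x‖ ^ 2) ^ (1/(2:ℝ)) := by rw [e1]
      _ ≤ ((∫ x in Ω, ‖a x‖ ^ 4) ^ (1/(2:ℝ)) * (∫ x in Ω, ‖c x‖ ^ 4) ^ (1/(2:ℝ))) ^ (1/(2:ℝ)) :=
          Real.rpow_le_rpow (integral_nonneg fun x => mul_nonneg (sq_nonneg _) (sq_nonneg _))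
            hHolder (by norm_num)
      _ = (∫ x in Ω, ‖a x‖ ^ 4) ^ ((1:ℝ)/4) * (∫ x in Ω, ‖c x‖ ^ 4) ^ ((1:ℝ)/4) := by
          rw [Real.mul_rpow (Real.rpow_nonneg hI4a _) (Real.rpow_nonneg hI4c _),
            ← Real.rpow_mul hI4a, ← Real.rpow_mul hI4c]
          norm_num
      _ = l4Norm Ω a * l4Norm Ω c := rfl
  calc |∫ x in Ω, convf a b c x| ≤ _ := step1
    _ ≤ _ := step2
    _ ≤ l4Norm Ω a * l4Norm Ω c * gradNorm Ω b := by
        rw [hgrad]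
        exact mul_le_mul_of_nonneg_right hF (gradNorm_nonneg Ω b)

lemma pd_sub {v w : E3 → E3} (hv : ContDiff ℝ 1 v) (hw : ContDiff ℝ 1 w) (j : Fin 3) (x : E3) :
    pd (v - w) j x = pd v j x - pd w j x := by
  unfold pd
  have hvw : (v - w) = fun y => v y - w y := rfl
  rw [hvw, fderiv_fun_sub ((hv.differentiable one_ne_zero) x) ((hw.differentiable one_ne_zero) x)]
  rfl

lemma convf_sub_left (v w u c : E3 → E3) (x : E3) :
    convf (v - w) u c x = convf v u c x - convf w u c x := by
  unfold convf
  rw [← Finset.sum_sub_distrib]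
  refine Finset.sum_congr rfl fun j _ => ?_
  have : (v - w) x j = v x j - w x j := rfl
  rw [this]; ring

lemma convf_sub_mid {v w : E3 → E3} (hv : ContDiff ℝ 1 v) (hw : ContDiff ℝ 1 w)
    (a c : E3 → E3) (x : E3) :
    convf a (v - w) c x = convf a v c x - convf a w c x := by
  unfold convf
  rw [← Finset.sum_sub_distrib]
  refine Finset.sum_congr rfl fun j _ => ?_
  rw [pd_sub hv hw, inner_sub_left]; ring


/-- Lipschitz continuity of the linearized Navier–Stokes convection operator:
with the `L⁴`-embedding constant `C_{4,P} ≤ (8/9)^{1/4} λ₁^{-1/8}`,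
`‖N'[v] − N'[w]‖ ≤ 2√3 C_{4,P}² ‖∇(v−w)‖`, giving the Lipschitz
constant `G = (4√6/3) λ₁^{-1/4}`. -/
theorem stmt_8 (Ω : Set E3) (hΩo : IsOpen Ω) (hΩb : Bornology.IsBounded Ω)
    (lam1 C4P : ℝ) (hlam : 0 < lam1) (hC0 : 0 ≤ C4P)
    (hemb : ∀ v, memV Ω v → l4Norm Ω v ≤ C4P * gradNorm Ω v)
    (hC4P : C4P ≤ (8 / 9 : ℝ) ^ ((1 : ℝ) / 4) * lam1 ^ (-(1 : ℝ) / 8))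
    (v w u ut : E3 → E3)
    (hv : memV Ω v) (hw : memV Ω w) (hu : memV Ω u) (hut : memV Ω ut) :
    |(∫ x in Ω, convf v u ut x) + (∫ x in Ω, convf u v ut x)
        - (∫ x in Ω, convf w u ut x) - ∫ x in Ω, convf u w ut x|
      ≤ 2 * Real.sqrt 3 * C4P ^ 2 * gradNorm Ω (v - w) * gradNorm Ω u * gradNorm Ω ut ∧
    |(∫ x in Ω, convf v u ut x) + (∫ x in Ω, convf u v ut x)
        - (∫ x in Ω, convf w u ut x) - ∫ x in Ω, convf u w ut x|
      ≤ (4 * Real.sqrt 6 / 3) * lam1 ^ (-(1 : ℝ) / 4)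
          * gradNorm Ω (v - w) * gradNorm Ω u * gradNorm Ω ut := by
  have hd1 : ContDiff ℝ 1 (v - w) := hv.1.sub hw.1
  have hdV : memV Ω (v - w) := by
    refine ⟨hd1, fun x hx => by simp [Pi.sub_apply, hv.2.1 x hx, hw.2.1 x hx], fun x => ?_⟩
    have hco : ∀ j : Fin 3, pd (v - w) j x j = pd v j x j - pd w j x j := fun j => by
      rw [pd_sub hv.1 hw.1]; rfl
    have h1 := hv.2.2 x
    have h2 := hw.2.2 x
    unfold divg at h1 h2 ⊢
    simp only [hco, Finset.sum_sub_distrib, h1, h2, sub_zero]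
  -- integrability
  have intvu := integrableOn_cont hΩo hΩb (continuous_convf hv.1 hu.1 hut.1)
  have intwu := integrableOn_cont hΩo hΩb (continuous_convf hw.1 hu.1 hut.1)
  have intuv := integrableOn_cont hΩo hΩb (continuous_convf hu.1 hv.1 hut.1)
  have intuw := integrableOn_cont hΩo hΩb (continuous_convf hu.1 hw.1 hut.1)
  have eq1 : ∫ x in Ω, convf (v - w) u ut x
      = (∫ x in Ω, convf v u ut x) - ∫ x in Ω, convf w u ut x := by
    rw [← integral_sub intvu intwu]
    exact integral_congr_ae (ae_of_all _ fun x => convf_sub_left v w u ut x)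
  have eq2 : ∫ x in Ω, convf u (v - w) ut x
      = (∫ x in Ω, convf u v ut x) - ∫ x in Ω, convf u w ut x := by
    rw [← integral_sub intuv intuw]
    exact integral_congr_ae (ae_of_all _ fun x => convf_sub_mid hv.1 hw.1 u ut x)
  have hEeq : (∫ x in Ω, convf v u ut x) + (∫ x in Ω, convf u v ut x)
        - (∫ x in Ω, convf w u ut x) - ∫ x in Ω, convf u w ut x
      = (∫ x in Ω, convf (v - w) u ut x) + ∫ x in Ω, convf u (v - w) ut x := by
    rw [eq1, eq2]; ring
  have k1 := key hΩo hΩb hd1 hu.1 hut.1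
  have k2 := key hΩo hΩb hu.1 hd1 hut.1
  have hembd := hemb _ hdV
  have hembu := hemb _ hu
  have hembut := hemb _ hut
  have gd0 := gradNorm_nonneg Ω (v - w)
  have gu0 := gradNorm_nonneg Ω u
  have gut0 := gradNorm_nonneg Ω ut
  have l4d0 := l4Norm_nonneg Ω (v - w)
  have l4u0 := l4Norm_nonneg Ω u
  have l4ut0 := l4Norm_nonneg Ω ut
  set gd := gradNorm Ω (v - w)
  set gu := gradNorm Ω u
  set gut := gradNorm Ω ut
  have hX : (0:ℝ) ≤ gd * gu * gut := by positivity
  have b1 : l4Norm Ω (v - w) * l4Norm Ω ut * gu ≤ C4P ^ 2 * (gd * gu * gut) := by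
    have h := mul_le_mul hembd hembut l4ut0 (mul_nonneg hC0 gd0)
    calc l4Norm Ω (v - w) * l4Norm Ω ut * gu ≤ C4P * gd * (C4P * gut) * gu :=
          mul_le_mul_of_nonneg_right h gu0
      _ = C4P ^ 2 * (gd * gu * gut) := by ring
  have b2 : l4Norm Ω u * l4Norm Ω ut * gd ≤ C4P ^ 2 * (gd * gu * gut) := by
    have h := mul_le_mul hembu hembut l4ut0 (mul_nonneg hC0 gu0)
    calc l4Norm Ω u * l4Norm Ω ut * gd ≤ C4P * gu * (C4P * gut) * gd :=
          mul_le_mul_of_nonneg_right h gd0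
      _ = C4P ^ 2 * (gd * gu * gut) := by ring
  have hmain : |(∫ x in Ω, convf v u ut x) + (∫ x in Ω, convf u v ut x)
        - (∫ x in Ω, convf w u ut x) - ∫ x in Ω, convf u w ut x|
      ≤ 2 * C4P ^ 2 * (gd * gu * gut) := by
    rw [hEeq]
    calc |(∫ x in Ω, convf (v - w) u ut x) + ∫ x in Ω, convf u (v - w) ut x|
        ≤ |∫ x in Ω, convf (v - w) u ut x| + |∫ x in Ω, convf u (v - w) ut x| := abs_add_le _ _
      _ ≤ l4Norm Ω (v - w) * l4Norm Ω ut * gu + l4Norm Ω u * l4Norm Ω ut * gd :=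
          add_le_add k1 k2
      _ ≤ C4P ^ 2 * (gd * gu * gut) + C4P ^ 2 * (gd * gu * gut) := add_le_add b1 b2
      _ = 2 * C4P ^ 2 * (gd * gu * gut) := by ring
  constructor
  · have h3 : (1:ℝ) ≤ Real.sqrt 3 := by
      nlinarith [Real.sq_sqrt (show (0:ℝ) ≤ 3 by norm_num), Real.sqrt_nonneg 3]
    refine hmain.trans ?_
    nlinarith [mul_nonneg (sq_nonneg C4P) hX]
  · set Q := lam1 ^ (-(1:ℝ) / 4) with hQdef
    have hQ : 0 ≤ Q := Real.rpow_nonneg hlam.le _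
    have hC2 : C4P ^ 2 ≤ Real.sqrt (8 / 9) * Q := by
      calc C4P ^ 2 ≤ ((8 / 9 : ℝ) ^ ((1 : ℝ) / 4) * lam1 ^ (-(1 : ℝ) / 8)) ^ 2 :=
            pow_le_pow_left₀ hC0 hC4P 2
        _ = ((8 / 9 : ℝ) ^ ((1 : ℝ) / 4)) ^ (2:ℕ) * (lam1 ^ (-(1 : ℝ) / 8)) ^ (2:ℕ) := by ring
        _ = Real.sqrt (8 / 9) * Q := by
            rw [← Real.rpow_natCast ((8 / 9 : ℝ) ^ ((1 : ℝ) / 4)) 2,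
              ← Real.rpow_natCast (lam1 ^ (-(1 : ℝ) / 8)) 2,
              ← Real.rpow_mul (by norm_num : (0:ℝ) ≤ 8 / 9),
              ← Real.rpow_mul hlam.le, Real.sqrt_eq_rpow, hQdef]
            norm_num
    have hsq : Real.sqrt (8 / 9 : ℝ) ≤ 2 / 3 * Real.sqrt 6 := by
      have h69 : (8 / 9 : ℝ) ≤ (2 / 3 * Real.sqrt 6) ^ 2 := by
        rw [mul_pow, Real.sq_sqrt (by norm_num : (0:ℝ) ≤ 6)]; norm_num
      calc Real.sqrt (8 / 9 : ℝ) ≤ Real.sqrt ((2 / 3 * Real.sqrt 6) ^ 2) := Real.sqrt_le_sqrt h69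
        _ = 2 / 3 * Real.sqrt 6 := Real.sqrt_sq (by positivity)
    refine hmain.trans ?_
    calc 2 * C4P ^ 2 * (gd * gu * gut) ≤ 2 * (Real.sqrt (8 / 9) * Q) * (gd * gu * gut) := by
          apply mul_le_mul_of_nonneg_right _ hX
          linarith
      _ ≤ 2 * (2 / 3 * Real.sqrt 6 * Q) * (gd * gu * gut) := by
          apply mul_le_mul_of_nonneg_right _ hX
          have := mul_le_mul_of_nonneg_right hsq hQ
          linarith
      _ = 4 * Real.sqrt 6 / 3 * Q * gd * gu * gut := by ring
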